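/- Let λ₁, κ₁, λ₂, κ₂ ∈ 𝔽_q((T^{-1})) with Δ := |λ₁κ₂ − λ₂κ₁| > 0 and with λ₁ ≠ 0 and κ₁/λ₁ ∉ 𝔽_q(T), and set L_j(Q) := λ_j Q₁ + κ_j Q₂ for Q = (Q₁,Q₂) and j = 1,2. Then for all ρ₁, ρ₂ ∈ 𝔽_q((T^{-1})) and every k ∈ ℕ there exists Q ∈ 𝔽_q[T]² such that |L₁(Q) + ρ₁|·|L₂(Q) + ρ₂| ≤ q^{-2}·Δ and additionally |L₁(Q) + ρ₁| < q^{-k}. -/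

import Mathlib

open Polynomial Filter
open scoped Classical ENNReal

noncomputable section

variable (Fq : Type) [Field Fq] [Fintype Fq]

/-- The element `T` inside the Laurent-series field `𝔽_q((T⁻¹))`, which we realize
as the field of Hahn/Laurent series in the variable `T⁻¹`. -/
def Tel : LaurentSeries Fq := HahnSeries.single (-1 : ℤ) 1

/-- The inverse variable `T⁻¹` itself. -/
def TinvEl : LaurentSeries Fq := HahnSeries.single (1 : ℤ) 1

/-- The embedding of the polynomial ring `𝔽_q[T]` into `𝔽_q((T⁻¹))`,
sending `T` to `Tel`. -/
def polyToL (P : Polynomial Fq) : LaurentSeries Fq :=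
  Polynomial.eval₂ HahnSeries.C (Tel Fq) P

/-- The absolute value `|x| = q ^ (deg x)` on `𝔽_q((T⁻¹))`, with `|0| = 0`.
Here the degree of `x ≠ 0` is minus the order of `x` as a series in `T⁻¹`. -/
def labs (x : LaurentSeries Fq) : ℝ :=
  if x = 0 then 0 else (Fintype.card Fq : ℝ) ^ (-x.order)

/-- `‖x‖`: the distance from `x` to the nearest polynomial. -/
def lnorm (x : LaurentSeries Fq) : ℝ :=
  ⨅ P : Polynomial Fq, labs Fq (x - polyToL Fq P)

/-- `x ∈ 𝔽_q(T)`, i.e. `x` is rational. -/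
def IsRat (x : LaurentSeries Fq) : Prop :=
  ∃ P Q : Polynomial Fq, Q ≠ 0 ∧ polyToL Fq Q * x = polyToL Fq P



namespace Mink

variable {Fq}

local notation "K" => LaurentSeries Fq

set_option linter.unusedSectionVars false


lemma polyToL_coeff (P : Polynomial Fq) (n : ℤ) :
    (polyToL Fq P).coeff n = if n ≤ 0 then P.coeff (-n).toNat else 0 := by
  induction P using Polynomial.induction_on' with
  | add p q hp hq =>
      simp only [polyToL, eval₂_add] at *
      simp only [HahnSeries.coeff_add, hp, hq, Polynomial.coeff_add]
      split <;> simp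
  | monomial i a =>
      rw [polyToL, eval₂_monomial, Tel, HahnSeries.single_pow]
      rw [show (HahnSeries.C a : LaurentSeries Fq) = HahnSeries.single 0 a from rfl]
      rw [HahnSeries.single_mul_single]
      rw [HahnSeries.coeff_single]
      simp only [zero_add, one_pow, nsmul_eq_mul, mul_one, mul_neg_one,
        Polynomial.coeff_monomial]
      by_cases h : n = -(i : ℤ)
      · subst h
        simp
      · rw [if_neg h]
        split
        · rw [if_neg (by omega)]
        · rfl


/-- polyToL as ring hom -/
def polyToLRH : Polynomial Fq →+* LaurentSeries Fq :=
  Polynomial.eval₂RingHom HahnSeries.C (Tel Fq)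

lemma polyToL_def (P : Polynomial Fq) : polyToL Fq P = polyToLRH P := rfl

lemma polyToL_add (P Q : Polynomial Fq) :
    polyToL Fq (P + Q) = polyToL Fq P + polyToL Fq Q := by
  simp [polyToL_def, map_add]

lemma polyToL_mul (P Q : Polynomial Fq) :
    polyToL Fq (P * Q) = polyToL Fq P * polyToL Fq Q := by
  simp [polyToL_def, map_mul]

lemma polyToL_neg (P : Polynomial Fq) : polyToL Fq (-P) = -polyToL Fq P := by
  simp [polyToL_def, map_neg]

lemma polyToL_zero : polyToL Fq 0 = 0 := by simp [polyToL_def, map_zero]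

/-- coefficients of the image of a polynomial vanish below -natDegree -/
lemma polyToL_coeff_eq_zero {P : Polynomial Fq} {d : ℕ} (hP : P.natDegree ≤ d)
    {n : ℤ} (hn : n < -(d:ℤ)) : (polyToL Fq P).coeff n = 0 := by
  rw [polyToL_coeff]
  rw [if_pos (by omega)]
  exact Polynomial.coeff_eq_zero_of_natDegree_lt (by omega)

/-- truncation: every Laurent series is a polynomial plus something of positive order -/
lemma exists_trunc (z : LaurentSeries Fq) :
    ∃ P : Polynomial Fq, ∀ n : ℤ, (z - polyToL Fq P).coeff n =
      if 0 < n then z.coeff n else 0 := by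
  by_cases hz : z = 0
  · refine ⟨0, fun n => ?_⟩
    simp [hz, polyToL_zero]
  · set d : ℕ := (-z.order).toNat with hd
    refine ⟨∑ i ∈ Finset.range (d+1), Polynomial.monomial i (z.coeff (-(i:ℤ))), fun n => ?_⟩
    have hcoe : ∀ j : ℕ, (∑ i ∈ Finset.range (d+1),
        Polynomial.monomial i (z.coeff (-(i:ℤ)))).coeff j =
        if j ≤ d then z.coeff (-(j:ℤ)) else 0 := by
      intro j
      rw [Polynomial.finset_sum_coeff]
      simp only [Polynomial.coeff_monomial]
      by_cases hj : j ≤ d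
      · rw [Finset.sum_eq_single j]
        · rw [if_pos rfl, if_pos hj]
        · intro b _ hb; rw [if_neg (by omega)]
        · intro h; exact absurd (Finset.mem_range.mpr (by omega)) h
      · rw [if_neg hj, Finset.sum_eq_zero]
        intro b hb
        rw [if_neg (by simp at hb; omega)]
    rw [HahnSeries.coeff_sub, polyToL_coeff]
    by_cases hn : 0 < n
    · rw [if_pos hn, if_neg (by omega)]
      ring
    · rw [if_neg hn, if_pos (by omega), hcoe]
      by_cases hnd : (-n).toNat ≤ d
      · rw [if_pos hnd]
        rw [show (-((-n).toNat:ℤ)) = n by omega]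
        ring
      · rw [if_neg hnd]
        have hord : n < z.order := by
          have h1 : ¬ (-z.order).toNat < (-n).toNat → z.order ≤ 0 → False := by omega
          by_cases h2 : z.order ≤ 0
          · omega
          · omega
        rw [HahnSeries.coeff_eq_zero_of_lt_order hord]
        ring


lemma one_lt_q : (1:ℝ) < (Fintype.card Fq : ℝ) := by
  exact_mod_cast Fintype.one_lt_card

lemma q_pos : (0:ℝ) < (Fintype.card Fq : ℝ) := lt_trans one_pos (one_lt_q (Fq := Fq))

lemma labs_nonneg (x : LaurentSeries Fq) : 0 ≤ labs Fq x := by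
  unfold labs
  split
  · exact le_refl 0
  · positivity

lemma labs_zero : labs Fq 0 = 0 := by simp [labs]

lemma labs_pos {x : LaurentSeries Fq} (hx : x ≠ 0) : 0 < labs Fq x := by
  rw [labs, if_neg hx]
  positivity

lemma ne_zero_of_labs_pos {x : LaurentSeries Fq} (h : 0 < labs Fq x) : x ≠ 0 := by
  intro h0; rw [h0, labs_zero] at h; exact lt_irrefl 0 h

lemma labs_le_zpow {x : LaurentSeries Fq} {m : ℤ} (h : ∀ i < m, x.coeff i = 0) :
    labs Fq x ≤ (Fintype.card Fq : ℝ) ^ (-m) := by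
  by_cases hx : x = 0
  · rw [hx, labs_zero]; positivity
  · rw [labs, if_neg hx]
    have hord : m ≤ x.order := by
      by_contra hlt
      exact (HahnSeries.coeff_order_eq_zero.not.mpr hx) (h _ (by omega))
    exact zpow_le_zpow_right₀ (le_of_lt (one_lt_q (Fq := Fq))) (by omega)

lemma labs_mul (x y : LaurentSeries Fq) :
    labs Fq (x * y) = labs Fq x * labs Fq y := by
  by_cases hx : x = 0
  · simp [hx, labs_zero]
  by_cases hy : y = 0
  · simp [hy, labs_zero]
  have hxy : x * y ≠ 0 := mul_ne_zero hx hy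
  rw [labs, labs, labs, if_neg hx, if_neg hy, if_neg hxy,
    HahnSeries.order_mul hx hy, neg_add, zpow_add₀ (ne_of_gt (q_pos (Fq := Fq)))]

lemma labs_add_le (x y : LaurentSeries Fq) :
    labs Fq (x + y) ≤ max (labs Fq x) (labs Fq y) := by
  by_cases hx : x = 0
  · simp [hx, le_max_right, labs_zero]
  by_cases hy : y = 0
  · simp [hy, le_max_left, labs_zero]
  by_cases hxy : x + y = 0
  · rw [hxy, labs_zero]
    exact le_max_of_le_left (labs_nonneg x)
  have hmin := HahnSeries.min_order_le_order_add (x := x) (y := y) hxy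
  rw [labs, labs, labs, if_neg hx, if_neg hy, if_neg hxy]
  rcases min_le_iff.mp (le_refl (min x.order y.order)) with h | h
  all_goals {
    rcases le_total x.order y.order with hc | hc
    · refine le_max_of_le_left (zpow_le_zpow_right₀ (le_of_lt (one_lt_q (Fq := Fq))) ?_)
      have : x.order ≤ (x+y).order := le_trans (by simp [min_eq_left hc]) hmin
      omega
    · refine le_max_of_le_right (zpow_le_zpow_right₀ (le_of_lt (one_lt_q (Fq := Fq))) ?_)
      have : y.order ≤ (x+y).order := le_trans (by simp [min_eq_right hc]) hmin
      omega }

lemma labs_polyToL_le {Q : Polynomial Fq} {d : ℕ} (h : Q = 0 ∨ Q.natDegree ≤ d) :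
    labs Fq (polyToL Fq Q) ≤ (Fintype.card Fq : ℝ) ^ (d:ℤ) := by
  rcases h with h | h
  · rw [h, polyToL_zero, labs_zero]; positivity
  · have := labs_le_zpow (Fq := Fq) (x := polyToL Fq Q) (m := -(d:ℤ))
      (fun i hi => polyToL_coeff_eq_zero h hi)
    rwa [neg_neg] at this


lemma C_mul_coeff (a : Fq) (y : LaurentSeries Fq) (n : ℤ) :
    ((HahnSeries.C a : LaurentSeries Fq) * y).coeff n = a * y.coeff n := by
  have : (HahnSeries.C a : LaurentSeries Fq) = HahnSeries.single 0 a := rfl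
  rw [this, show n = n + 0 by ring, HahnSeries.coeff_single_mul_add]
  simp

lemma polyToL_C_mul (a : Fq) (P : Polynomial Fq) :
    polyToL Fq (Polynomial.C a * P) = HahnSeries.C a * polyToL Fq P := by
  rw [polyToL_mul]
  congr 1
  rw [polyToL, Polynomial.eval₂_C]

/-- Dirichlet pigeonhole: good approximations of any quality exist. -/
lemma dirichlet (θ : LaurentSeries Fq) (m : ℕ) :
    ∃ Q : Polynomial Fq, Q ≠ 0 ∧ Q.natDegree ≤ m ∧ ∃ P : Polynomial Fq,
      ∀ i < (m:ℤ) + 1, (θ * polyToL Fq Q - polyToL Fq P).coeff i = 0 := by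
  classical
  let Φ : Polynomial.degreeLT Fq (m+1) →ₗ[Fq] (Fin m → Fq) :=
    { toFun := fun Q => fun j => (θ * polyToL Fq Q.val).coeff ((j:ℤ)+1)
      map_add' := by
        intro Q Q'
        funext j
        simp [polyToL_add, mul_add, HahnSeries.coeff_add]
      map_smul' := by
        intro a Q
        funext j
        have : ((a • Q : Polynomial.degreeLT Fq (m+1)) : Polynomial Fq)
            = Polynomial.C a * Q.val := by
          simp [Polynomial.smul_eq_C_mul]
        simp only [this, polyToL_C_mul, RingHom.id_apply, Pi.smul_apply, smul_eq_mul]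
        rw [show θ * ((HahnSeries.C a : LaurentSeries Fq) * polyToL Fq Q.val)
            = (HahnSeries.C a : LaurentSeries Fq) * (θ * polyToL Fq Q.val) by ring]
        rw [C_mul_coeff] }
  have hnotinj : ¬ Function.Injective Φ := by
    intro hinj
    have h1 := LinearMap.finrank_le_finrank_of_injective hinj
    rw [(Polynomial.degreeLTEquiv Fq (m+1)).finrank_eq] at h1
    simp [Module.finrank_fin_fun] at h1
  have hker : LinearMap.ker Φ ≠ ⊥ := by
    intro h
    exact hnotinj (LinearMap.ker_eq_bot.mp h)
  obtain ⟨v, hv, hvne⟩ := (Submodule.ne_bot_iff _).mp hker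
  refine ⟨v.val, by simpa using hvne, ?_, ?_⟩
  · have := Polynomial.mem_degreeLT.mp v.2
    rcases eq_or_ne v.val 0 with h | h
    · simp [h]
    · have := (Polynomial.natDegree_lt_iff_degree_lt h).mpr this
      omega
  · obtain ⟨P, hP⟩ := exists_trunc (θ * polyToL Fq v.val)
    refine ⟨P, fun i hi => ?_⟩
    rw [hP i]
    by_cases h0 : 0 < i
    · rw [if_pos h0]
      have : Φ v = 0 := hv
      have h2 : (θ * polyToL Fq v.val).coeff ((((i-1).toNat : ℤ)) + 1) = 0 :=
        congrFun this ⟨(i-1).toNat, by omega⟩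
      rwa [show (((i-1).toNat : ℤ)) + 1 = i by omega] at h2
    · rw [if_neg h0]


lemma polyToL_C_mul_Xpow (a : Fq) (t : ℕ) :
    polyToL Fq (Polynomial.C a * Polynomial.X ^ t) = HahnSeries.single (-(t:ℤ)) a := by
  rw [polyToL_mul]
  have h1 : polyToL Fq (Polynomial.C a) = HahnSeries.single 0 a := by
    rw [polyToL, Polynomial.eval₂_C]; rfl
  have h2 : polyToL Fq (Polynomial.X ^ t) = HahnSeries.single (-(t:ℤ)) 1 := by
    rw [polyToL, Polynomial.eval₂_X_pow, Tel, HahnSeries.single_pow]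
    congr 1
    · simp [nsmul_eq_mul]
    · simp
  rw [h1, h2, HahnSeries.single_mul_single]
  congr 1
  · ring
  · ring

/-- digit cancellation using an exact approximation `z` of order `e` -/
lemma cancel (z : LaurentSeries Fq) (e : ℤ) (hz : ∀ i < e, z.coeff i = 0)
    (hze : z.coeff e ≠ 0) :
    ∀ t : ℕ, ∀ r : LaurentSeries Fq, (∀ i < e + 1 - t, r.coeff i = 0) →
    ∃ c : Polynomial Fq, (c = 0 ∨ c.natDegree < t) ∧
      ∀ i < e + 1, (r + polyToL Fq c * z).coeff i = 0 := by
  intro t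
  induction t with
  | zero =>
      intro r hr
      refine ⟨0, Or.inl rfl, fun i hi => ?_⟩
      rw [polyToL_zero, zero_mul, add_zero]
      exact hr i (by omega)
  | succ t ih =>
      intro r hr
      set a : Fq := -(r.coeff (e - t)) / z.coeff e with ha
      set c₀ : Polynomial Fq := Polynomial.C a * Polynomial.X ^ t with hc₀
      have hcoeff : ∀ i : ℤ, (polyToL Fq c₀ * z).coeff i = a * z.coeff (i + t) := by
        intro i
        rw [hc₀, polyToL_C_mul_Xpow,
          show i = (i + t) + (-(t:ℤ)) by ring, HahnSeries.coeff_single_mul_add]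
        ring_nf
      have hr' : ∀ i < e + 1 - t, (r + polyToL Fq c₀ * z).coeff i = 0 := by
        intro i hi
        rw [HahnSeries.coeff_add, hcoeff]
        rcases lt_or_eq_of_le (show i ≤ e - t by omega) with h | h
        · rw [hr i (by omega), hz (i + t) (by omega)]
          ring
        · subst h
          rw [show e - t + t = e by ring, ha]
          field_simp
          ring
      obtain ⟨c₁, hc₁deg, hc₁⟩ := ih (r + polyToL Fq c₀ * z) hr'
      refine ⟨c₀ + c₁, ?_, fun i hi => ?_⟩
      · rcases eq_or_ne (c₀ + c₁) 0 with h | h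
        · exact Or.inl h
        · refine Or.inr (lt_of_le_of_lt (Polynomial.natDegree_add_le c₀ c₁) ?_)
          have h0 : c₀.natDegree ≤ t := Polynomial.natDegree_C_mul_X_pow_le a t
          have h1 : c₁.natDegree ≤ t := by
            rcases hc₁deg with h | h
            · simp [h]
            · omega
          omega
      · rw [polyToL_add, add_mul, ← add_assoc]
        exact hc₁ i hi


/-- the approximation property at quality level `D` -/
def Good (θ : LaurentSeries Fq) (D : ℕ) : Prop :=
  ∀ x : LaurentSeries Fq, (∀ i < (1:ℤ), x.coeff i = 0) →
    ∃ Q P : Polynomial Fq, (Q = 0 ∨ Q.natDegree < D) ∧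
      ∀ i < (D:ℤ) + 1, (θ * polyToL Fq Q - polyToL Fq P + x).coeff i = 0

lemma good_zero (θ : LaurentSeries Fq) : Good θ 0 := by
  intro x hx
  refine ⟨0, 0, Or.inl rfl, fun i hi => ?_⟩
  simpa [polyToL_zero] using hx i (by omega)

lemma step (θ : LaurentSeries Fq) (hirr : ¬ IsRat Fq θ) (D : ℕ) (hD : Good θ D) :
    ∃ D' : ℕ, D < D' ∧ Good θ D' := by
  obtain ⟨Q₀, hQ₀ne, hQ₀deg, P₀, hP₀⟩ := dirichlet θ D
  set z := θ * polyToL Fq Q₀ - polyToL Fq P₀ with hzdef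
  have hzne : z ≠ 0 := by
    intro h
    rw [hzdef] at h
    exact hirr ⟨P₀, Q₀, hQ₀ne, by rw [mul_comm]; exact sub_eq_zero.mp h⟩
  set e := z.order with hedef
  have hze : z.coeff e ≠ 0 := HahnSeries.coeff_order_eq_zero.not.mpr hzne
  have he : (D:ℤ) + 1 ≤ e := by
    by_contra hlt
    exact hze (hP₀ e (by omega))
  have hz_lt : ∀ i < e, z.coeff i = 0 := fun i hi =>
    HahnSeries.coeff_eq_zero_of_lt_order hi
  refine ⟨e.toNat, by omega, ?_⟩
  intro x hx
  obtain ⟨Q, P, hQdeg, hSm⟩ := hD x hx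
  set r := θ * polyToL Fq Q - polyToL Fq P + x with hrdef
  have hrsm : ∀ i < e + 1 - ((e - D).toNat : ℤ), r.coeff i = 0 := by
    intro i hi
    exact hSm i (by omega)
  obtain ⟨c, hcdeg, hc⟩ := cancel z e hz_lt hze (e - D).toNat r hrsm
  refine ⟨Q + c * Q₀, P + c * P₀, ?_, ?_⟩
  · rcases eq_or_ne (Q + c * Q₀) 0 with h | h
    · exact Or.inl h
    · refine Or.inr (lt_of_le_of_lt (Polynomial.natDegree_add_le Q (c * Q₀)) ?_)
      have h1 : Q.natDegree < e.toNat := by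
        rcases hQdeg with h | h
        · simp [h]; omega
        · omega
      have h2 : (c * Q₀).natDegree < e.toNat := by
        rcases hcdeg with h | h
        · simp [h]; omega
        · refine lt_of_le_of_lt (Polynomial.natDegree_mul_le) ?_
          omega
      omega
  · intro i hi
    have key : θ * polyToL Fq (Q + c * Q₀) - polyToL Fq (P + c * P₀) + x
        = r + polyToL Fq c * z := by
      rw [polyToL_add, polyToL_add, polyToL_mul, polyToL_mul, hrdef, hzdef]
      ring
    rw [key]
    exact hc i (by omega)

lemma good_unbounded (θ : LaurentSeries Fq) (hirr : ¬ IsRat Fq θ) (n : ℕ) :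
    ∃ D : ℕ, n ≤ D ∧ Good θ D := by
  induction n with
  | zero => exact ⟨0, le_refl 0, good_zero θ⟩
  | succ n ih =>
      obtain ⟨D, hD, hgood⟩ := ih
      obtain ⟨D', hD', hgood'⟩ := step θ hirr D hgood
      exact ⟨D', by omega, hgood'⟩

end Mink

open Mink in
/-- **Minkowski's theorem, refined form.** If moreover `κ₁/λ₁` is irrational,
then for every `k ∈ ℕ` the solution `Q` can be chosen with the additional
property `|L₁(Q) + ρ₁| < q⁻ᵏ`. -/
theorem stmt9 (lam1 kap1 lam2 kap2 : LaurentSeries Fq)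
    (hΔ : 0 < labs Fq (lam1 * kap2 - lam2 * kap1))
    (hlam1 : lam1 ≠ 0) (hirr : ¬ IsRat Fq (kap1 / lam1))
    (ρ1 ρ2 : LaurentSeries Fq) (k : ℕ) :
    ∃ Q1 Q2 : Polynomial Fq,
      labs Fq (lam1 * polyToL Fq Q1 + kap1 * polyToL Fq Q2 + ρ1) *
        labs Fq (lam2 * polyToL Fq Q1 + kap2 * polyToL Fq Q2 + ρ2) ≤
        labs Fq (lam1 * kap2 - lam2 * kap1) / (Fintype.card Fq : ℝ) ^ 2 ∧
      labs Fq (lam1 * polyToL Fq Q1 + kap1 * polyToL Fq Q2 + ρ1) <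
        (Fintype.card Fq : ℝ) ^ (-(k : ℤ)) := by
  have hq : (1:ℝ) < (Fintype.card Fq : ℝ) := one_lt_q
  have hq0 : (0:ℝ) < (Fintype.card Fq : ℝ) := q_pos
  set q : ℝ := (Fintype.card Fq : ℝ) with hqdef
  set θ : LaurentSeries Fq := kap1 / lam1 with hθdef
  set Δ : LaurentSeries Fq := lam1 * kap2 - lam2 * kap1 with hΔdef
  have hΔne : Δ ≠ 0 := ne_zero_of_labs_pos hΔ
  set σ : LaurentSeries Fq := (lam1 * ρ2 - lam2 * ρ1) / Δ with hσdef
  obtain ⟨R, hR⟩ := exists_trunc (ρ1 / lam1)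
  set x : LaurentSeries Fq := ρ1 / lam1 - polyToL Fq R with hxdef
  have hx1 : ∀ i < (1:ℤ), x.coeff i = 0 := by
    intro i hi
    rw [hxdef, hR, if_neg (by omega)]
  -- positivity facts
  have hlam1pos : 0 < labs Fq lam1 := labs_pos hlam1
  have hΔpos : 0 < labs Fq Δ := labs_pos hΔne
  -- choose the quality level
  obtain ⟨n₁, hn₁⟩ : ∃ n : ℕ, labs Fq σ < q ^ n := pow_unbounded_of_one_lt _ hq
  set C₀ : ℝ := labs Fq lam2 * labs Fq lam1 ^ 2 with hC₀def
  have hC₀nonneg : 0 ≤ C₀ := by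
    rw [hC₀def]; exact mul_nonneg (labs_nonneg _) (sq_nonneg _)
  have hC₀pos : 0 < C₀ + 1 := by linarith
  set ε₂ : ℝ := (labs Fq lam1 * (labs Fq Δ / q ^ 2)) / (C₀ + 1) with hε₂def
  have hε₂pos : 0 < ε₂ := by
    rw [hε₂def]
    exact div_pos (mul_pos hlam1pos (div_pos hΔpos (by positivity))) hC₀pos
  obtain ⟨n₂, hn₂⟩ : ∃ n : ℕ, (1/q) ^ n < ε₂ :=
    exists_pow_lt_of_lt_one hε₂pos (by rw [div_lt_one hq0]; exact hq)
  set ε₃ : ℝ := (q ^ (-(k:ℤ))) / labs Fq lam1 with hε₃def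
  have hε₃pos : 0 < ε₃ := by
    rw [hε₃def]
    exact div_pos (by positivity) hlam1pos
  obtain ⟨n₃, hn₃⟩ : ∃ n : ℕ, (1/q) ^ n < ε₃ :=
    exists_pow_lt_of_lt_one hε₃pos (by rw [div_lt_one hq0]; exact hq)
  obtain ⟨D, hnD, hgood⟩ := good_unbounded θ hirr (n₁ + n₂ + n₃ + 1)
  obtain ⟨Q, P, hQdeg, hSm⟩ := hgood x hx1
  set w : LaurentSeries Fq := θ * polyToL Fq Q - polyToL Fq P + x with hwdef
  have hwabs : labs Fq w ≤ q ^ (-((D:ℤ)+1)) := labs_le_zpow hSm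
  refine ⟨-(P + R), Q, ?_⟩
  have hL1 : lam1 * polyToL Fq (-(P+R)) + kap1 * polyToL Fq Q + ρ1 = lam1 * w := by
    rw [hwdef, hxdef, hθdef, polyToL_neg, polyToL_add]
    field_simp
    ring
  have habsL1 : labs Fq (lam1 * polyToL Fq (-(P+R)) + kap1 * polyToL Fq Q + ρ1)
      = labs Fq lam1 * labs Fq w := by rw [hL1, labs_mul]
  have hL1le : labs Fq (lam1 * polyToL Fq (-(P+R)) + kap1 * polyToL Fq Q + ρ1)
      ≤ labs Fq lam1 * q ^ (-((D:ℤ)+1)) := by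
    rw [habsL1]
    exact mul_le_mul_of_nonneg_left hwabs (le_of_lt hlam1pos)
  -- monotonicity of zpow
  have hmono : ∀ m : ℕ, m ≤ D + 1 → q ^ (-((D:ℤ)+1)) ≤ (1/q) ^ m := by
    intro m hm
    rw [one_div, inv_pow, ← zpow_natCast, ← zpow_neg]
    exact zpow_le_zpow_right₀ (le_of_lt hq) (by omega)
  constructor
  · -- the product bound
    set L1v : ℝ := labs Fq (lam1 * polyToL Fq (-(P+R)) + kap1 * polyToL Fq Q + ρ1) with hL1v
    set L2v : ℝ := labs Fq (lam2 * polyToL Fq (-(P+R)) + kap2 * polyToL Fq Q + ρ2) with hL2v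
    have key : lam1 * (lam2 * polyToL Fq (-(P+R)) + kap2 * polyToL Fq Q + ρ2)
        = lam2 * (lam1 * polyToL Fq (-(P+R)) + kap1 * polyToL Fq Q + ρ1)
          + Δ * (polyToL Fq Q + σ) := by
      rw [hσdef]
      field_simp
      rw [hΔdef]
      ring
    have h2 : labs Fq lam1 * L2v ≤
        max (labs Fq lam2 * L1v) (labs Fq Δ * labs Fq (polyToL Fq Q + σ)) := by
      rw [hL2v, hL1v, ← labs_mul, ← labs_mul, ← labs_mul, key]
      exact labs_add_le _ _
    have hQ2σ : labs Fq (polyToL Fq Q + σ) ≤ q ^ ((D:ℤ)-1) := by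
      refine le_trans (labs_add_le _ _) (max_le ?_ ?_)
      · have hD1 : 1 ≤ D := by omega
        have := labs_polyToL_le (Fq := Fq) (Q := Q) (d := D - 1)
          (by rcases hQdeg with h | h; exact Or.inl h; exact Or.inr (by omega))
        rwa [show ((D - 1 : ℕ) : ℤ) = (D:ℤ) - 1 by omega] at this
      · refine le_trans (le_of_lt hn₁) ?_
        rw [← zpow_natCast]
        exact zpow_le_zpow_right₀ (le_of_lt hq) (by omega)
    -- combine
    rw [← mul_le_mul_iff_right₀ hlam1pos]
    calc labs Fq lam1 * (L1v * L2v) = L1v * (labs Fq lam1 * L2v) := by ring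
      _ ≤ L1v * max (labs Fq lam2 * L1v) (labs Fq Δ * labs Fq (polyToL Fq Q + σ)) := by
          exact mul_le_mul_of_nonneg_left h2 (by rw [hL1v]; exact labs_nonneg _)
      _ = max (L1v * (labs Fq lam2 * L1v))
            (L1v * (labs Fq Δ * labs Fq (polyToL Fq Q + σ))) := by
          rw [mul_max_of_nonneg _ _ (by rw [hL1v]; exact labs_nonneg _)]
      _ ≤ labs Fq lam1 * (labs Fq Δ / q ^ 2) := by
          refine max_le ?_ ?_
          · -- branch A
            have hs1 : q ^ (-((D:ℤ)+1)) ≤ (1/q) ^ n₂ := hmono n₂ (by omega)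
            have hs01 : q ^ (-((D:ℤ)+1)) ≤ 1 := by
              rw [← zpow_zero q]
              exact zpow_le_zpow_right₀ (le_of_lt hq) (by omega)
            have hs0 : (0:ℝ) ≤ q ^ (-((D:ℤ)+1)) := by positivity
            have hL1v0 : 0 ≤ L1v := by rw [hL1v]; exact labs_nonneg _
            refine le_of_lt ?_
            calc L1v * (labs Fq lam2 * L1v)
                ≤ (labs Fq lam1 * q ^ (-((D:ℤ)+1)))
                  * (labs Fq lam2 * (labs Fq lam1 * q ^ (-((D:ℤ)+1)))) := by
                  refine mul_le_mul hL1le ?_ ?_ (mul_nonneg (labs_nonneg _) (by positivity))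
                  · exact mul_le_mul_of_nonneg_left hL1le (labs_nonneg _)
                  · exact mul_nonneg (labs_nonneg _) hL1v0
              _ = C₀ * (q ^ (-((D:ℤ)+1)) * q ^ (-((D:ℤ)+1))) := by
                  rw [hC₀def]; ring
              _ ≤ (C₀ + 1) * ((1/q) ^ n₂ * 1) := by
                  refine mul_le_mul (by linarith) ?_ (by positivity) (le_of_lt hC₀pos)
                  exact mul_le_mul hs1 hs01 hs0 (by positivity)
              _ < (C₀ + 1) * ε₂ := by
                  rw [mul_one]
                  exact mul_lt_mul_of_pos_left hn₂ hC₀pos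
              _ = labs Fq lam1 * (labs Fq Δ / q ^ 2) := by
                  rw [hε₂def, mul_comm, div_mul_cancel₀ _ (ne_of_gt hC₀pos)]
          · -- branch B
            have hqq : q ^ (-((D:ℤ)+1)) * q ^ ((D:ℤ)-1) = 1 / q ^ 2 := by
              rw [← zpow_add₀ (ne_of_gt hq0), show (-((D:ℤ)+1)) + ((D:ℤ)-1) = -2 by ring]
              rw [show ((-2 : ℤ)) = -((2:ℕ):ℤ) by norm_num, zpow_neg, zpow_natCast]
              rw [one_div]
            calc L1v * (labs Fq Δ * labs Fq (polyToL Fq Q + σ))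
                ≤ (labs Fq lam1 * q ^ (-((D:ℤ)+1)))
                  * (labs Fq Δ * q ^ ((D:ℤ)-1)) := by
                  refine mul_le_mul hL1le ?_ ?_ (mul_nonneg (labs_nonneg _) (by positivity))
                  · exact mul_le_mul_of_nonneg_left hQ2σ (labs_nonneg _)
                  · exact mul_nonneg (labs_nonneg _) (labs_nonneg _)
              _ = labs Fq lam1 * labs Fq Δ * (q ^ (-((D:ℤ)+1)) * q ^ ((D:ℤ)-1)) := by ring
              _ = labs Fq lam1 * (labs Fq Δ / q ^ 2) := by
                  rw [hqq]; ring
  · -- the smallness bound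
    refine lt_of_le_of_lt hL1le ?_
    have hs1 : q ^ (-((D:ℤ)+1)) ≤ (1/q) ^ n₃ := hmono n₃ (by omega)
    calc labs Fq lam1 * q ^ (-((D:ℤ)+1)) ≤ labs Fq lam1 * (1/q) ^ n₃ :=
          mul_le_mul_of_nonneg_left hs1 (le_of_lt hlam1pos)
      _ < labs Fq lam1 * ε₃ := mul_lt_mul_of_pos_left hn₃ hlam1pos
      _ = q ^ (-(k:ℤ)) := by
          rw [hε₃def, mul_comm, div_mul_cancel₀ _ (ne_of_gt hlam1pos)]

end
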